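/- With the data (E, v, G, V, α) as in the context, for every integer p one has F'_{α+p} = Σ_{n≥0} v^n(G_p ∩ V_α) + Σ_{j=1}^{p} (G_{p−j} ∩ V_{α+j}) (sum of submodules of E). In particular F'_{α+p} = 0 for p < 0. -/

import Mathlib

/-- `F'_{α+p} := Σ_{k+j ≤ p} (G_k ∩ V_{α+j})`. -/
def Fprime {R E : Type*} [CommRing R] [AddCommGroup E] [Module R E]
    (G : ℤ → Submodule R E) (V : ℚ → Submodule R E) (α : ℚ) (p : ℤ) :
    Submodule R E :=
  ⨆ (k : ℤ) (j : ℤ) (_ : k + j ≤ p), (G k ⊓ V (α + (j : ℚ)))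

/-- `F'_{α+p} = Σ_{n≥0} v^n(G_p ∩ V_α) + Σ_{j=1}^p (G_{p−j} ∩ V_{α+j})`; in
particular `F'_{α+p} = 0` for `p < 0`. -/
theorem stmt_12 {R E : Type*} [CommRing R] [AddCommGroup E] [Module R E]
    (v : E →ₗ[R] E) (hv : Function.Injective v)
    (G : ℤ → Submodule R E) (hGmono : Monotone G)
    (hG0 : ∀ k : ℤ, k < 0 → G k = ⊥)
    (hGv : ∀ (m : ℤ) (n : ℕ),
      G m ⊓ LinearMap.range (v ^ n) = (G (m - n)).map (v ^ n))
    (V : ℚ → Submodule R E) (hVmono : Monotone V)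
    (hVv : ∀ γ : ℚ, 0 ≤ γ → γ < 1 → ∀ k : ℕ, 1 ≤ k →
      V (γ - k) = (V γ).map (v ^ k))
    (α : ℚ) (hα0 : 0 ≤ α) (hα1 : α < 1) :
    (∀ p : ℤ,
      Fprime G V α p =
        (⨆ n : ℕ, (G p ⊓ V α).map (v ^ n)) ⊔
          ⨆ j ∈ Finset.Icc (1 : ℤ) p, (G (p - j) ⊓ V (α + (j : ℚ)))) ∧
    (∀ p : ℤ, p < 0 → Fprime G V α p = ⊥) := by
  have hinj : ∀ n : ℕ, Function.Injective ⇑(v ^ n) := fun n => by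
    rw [Module.End.coe_pow]; exact hv.iterate n
  have key : ∀ (k : ℤ) (n : ℕ),
      G k ⊓ (V α).map (v ^ n) = (G (k - n) ⊓ V α).map (v ^ n) := by
    intro k n
    apply le_antisymm
    · rintro x ⟨hxG, y, hyV, rfl⟩
      have hx : (v ^ n) y ∈ (G (k - n)).map (v ^ n) := by
        rw [← hGv]; exact ⟨hxG, ⟨y, rfl⟩⟩
      obtain ⟨z, hz, hzy⟩ := hx
      exact ⟨y, ⟨(hinj n hzy) ▸ hz, hyV⟩, rfl⟩
    · rintro x ⟨y, ⟨hyG, hyV⟩, rfl⟩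
      have hx : (v ^ n) y ∈ G k ⊓ LinearMap.range (v ^ n) := by
        rw [hGv]; exact ⟨y, hyG, rfl⟩
      exact ⟨hx.1, ⟨y, hyV, rfl⟩⟩
  have hVneg : ∀ n : ℕ, V (α - n) = (V α).map (v ^ n) := by
    intro n
    cases n with
    | zero => ext x; simp [pow_zero, Module.End.one_apply]
    | succ m => exact hVv α hα0 hα1 (m + 1) (by omega)
  have main : ∀ p : ℤ,
      Fprime G V α p =
        (⨆ n : ℕ, (G p ⊓ V α).map (v ^ n)) ⊔
          ⨆ j ∈ Finset.Icc (1 : ℤ) p, (G (p - j) ⊓ V (α + (j : ℚ))) := by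
    intro p
    apply le_antisymm
    · refine iSup_le fun k => iSup_le fun j => iSup_le fun hkj => ?_
      rcases le_or_gt j 0 with hj | hj
      · set n : ℕ := (-j).toNat with hn
        have hnz : (n : ℤ) = -j := Int.toNat_of_nonneg (by omega)
        have hjq : α + (j : ℚ) = α - (n : ℚ) := by
          have : ((n : ℤ) : ℚ) = ((-j : ℤ) : ℚ) := by rw [hnz]
          push_cast at this
          rw [this]; ring
        calc G k ⊓ V (α + (j : ℚ))
            = G k ⊓ (V α).map (v ^ n) := by rw [hjq, hVneg]
          _ = (G (k - n) ⊓ V α).map (v ^ n) := key k n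
          _ ≤ (G p ⊓ V α).map (v ^ n) :=
              Submodule.map_mono (inf_le_inf_right _ (hGmono (by omega)))
          _ ≤ ⨆ m : ℕ, (G p ⊓ V α).map (v ^ m) := le_iSup (fun m : ℕ => (G p ⊓ V α).map (v ^ m)) n
          _ ≤ _ := le_sup_left
      · rcases le_or_gt j p with hjp | hjp
        · calc G k ⊓ V (α + (j : ℚ))
              ≤ G (p - j) ⊓ V (α + (j : ℚ)) :=
                inf_le_inf_right _ (hGmono (by omega))
            _ ≤ ⨆ j ∈ Finset.Icc (1 : ℤ) p, (G (p - j) ⊓ V (α + (j : ℚ))) :=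
                le_iSup₂ (f := fun j _ => G (p - j) ⊓ V (α + (j : ℚ))) j
                  (Finset.mem_Icc.mpr ⟨by omega, hjp⟩)
            _ ≤ _ := le_sup_right
        · have hk : G k = ⊥ := hG0 k (by omega)
          simp [hk]
    · apply sup_le
      · refine iSup_le fun n => ?_
        have h2 : V (α + ((-(n : ℤ) : ℤ) : ℚ)) = (V α).map (v ^ n) := by
          rw [show α + ((-(n : ℤ) : ℤ) : ℚ) = α - (n : ℚ) by push_cast; ring]
          exact hVneg n
        have h1 := key (p + n) n
        rw [show p + (n : ℤ) - (n : ℤ) = p by ring] at h1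
        rw [← h1, ← h2]
        exact le_iSup_of_le (p + (n : ℤ))
          (le_iSup_of_le (-(n : ℤ)) (le_iSup_of_le (by omega) le_rfl))
      · refine iSup₂_le fun j hj => ?_
        obtain ⟨h1j, hjp⟩ := Finset.mem_Icc.mp hj
        exact le_iSup_of_le (p - j)
          (le_iSup_of_le j (le_iSup_of_le (by omega) le_rfl))
  refine ⟨main, fun p hp => ?_⟩
  rw [main p, hG0 p hp, Finset.Icc_eq_empty (by omega)]
  simp
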